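/- Define mutually recursive LTL formula families φ_{R,0} = FG a₀ ∧ GF b₀, φ_{R,n+1} = (FG a_{n+1} ∧ GF b_{n+1}) ∨ φ_{S,n}, φ_{S,0} = FG a₀ ∨ GF b₀, φ_{S,n+1} = (FG a_{n+1} ∨ GF b_{n+1}) ∧ φ_{R,n}, over distinct atomic propositions a₀,b₀,…,a_n,b_n. Call the subformulas FG a_j and GF b_j leafs, and call a set L of leafs a good leaf set for φ if L is a minimal set of leafs whose truth (treating leafs as propositional variables, setting those in L true and all others false) makes φ propositionally true. Then the number of good leaf sets of φ_{R,n} (and of φ_{S,n}) is at least 2^{⌊n/2⌋}. -/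

import Mathlib

/-- positive propositional formulas over variables V -/
inductive PForm (V : Type) : Type
  | var : V → PForm V
  | and : PForm V → PForm V → PForm V
  | or : PForm V → PForm V → PForm V

/-- propositional satisfaction by an assignment (set of true variables) -/
def PSat {V : Type} (S : Set V) : PForm V → Prop
  | .var v => v ∈ S
  | .and a b => PSat S a ∧ PSat S b
  | .or a b => PSat S a ∨ PSat S b

-- leafs: (false, j) stands for FG a_j, (true, j) stands for GF b_j
mutual
def phiR : ℕ → PForm (Bool × ℕ)
  | 0 => .and (.var (false, 0)) (.var (true, 0))
  | n + 1 => .or (.and (.var (false, n + 1)) (.var (true, n + 1))) (phiS n)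
def phiS : ℕ → PForm (Bool × ℕ)
  | 0 => .or (.var (false, 0)) (.var (true, 0))
  | n + 1 => .and (.or (.var (false, n + 1)) (.var (true, n + 1))) (phiR n)
end

/-- a good leaf set: a minimal satisfying set of leafs -/
def GoodLeaf (L : Set (Bool × ℕ)) (φ : PForm (Bool × ℕ)) : Prop :=
  PSat L φ ∧ ∀ L' ⊂ L, ¬ PSat L' φ

def pvars {V : Type} : PForm V → Set V
  | .var v => {v}
  | .and a b => pvars a ∪ pvars b
  | .or a b => pvars a ∪ pvars b

lemma pvars_finite {V : Type} (φ : PForm V) : (pvars φ).Finite := by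
  induction φ with
  | var v => simp [pvars]
  | and a b ha hb => exact (ha.union hb)
  | or a b ha hb => exact (ha.union hb)

lemma psat_mono {V : Type} {L M : Set V} (h : L ⊆ M) :
    ∀ {φ : PForm V}, PSat L φ → PSat M φ := by
  intro φ
  induction φ with
  | var v => exact fun hv => h hv
  | and a b ha hb => exact fun ⟨x, y⟩ => ⟨ha x, hb y⟩
  | or a b ha hb => exact fun h => h.elim (fun x => Or.inl (ha x)) (fun y => Or.inr (hb y))

lemma psat_inter {V : Type} {L : Set V} :
    ∀ {φ : PForm V}, PSat L φ → PSat (L ∩ pvars φ) φ := by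
  intro φ
  induction φ with
  | var v => exact fun hv => ⟨hv, rfl⟩
  | and a b ha hb => exact fun ⟨x, y⟩ =>
      ⟨psat_mono (by intro z hz; exact ⟨hz.1, Or.inl hz.2⟩) (ha x),
       psat_mono (by intro z hz; exact ⟨hz.1, Or.inr hz.2⟩) (hb y)⟩
  | or a b ha hb =>
      rintro (x | y)
      · exact Or.inl (psat_mono (by intro z hz; exact ⟨hz.1, Or.inl hz.2⟩) (ha x))
      · exact Or.inr (psat_mono (by intro z hz; exact ⟨hz.1, Or.inr hz.2⟩) (hb y))

lemma good_subset_vars {L : Set (Bool × ℕ)} {φ : PForm (Bool × ℕ)}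
    (h : GoodLeaf L φ) : L ⊆ pvars φ := by
  by_contra hc
  rw [Set.not_subset] at hc
  obtain ⟨x, hxL, hxv⟩ := hc
  have hss : L ∩ pvars φ ⊂ L := by
    constructor
    · exact Set.inter_subset_left
    · intro hsub
      exact hxv (hsub hxL).2
  exact h.2 _ hss (psat_inter h.1)

lemma goodset_finite (φ : PForm (Bool × ℕ)) :
    {L : Set (Bool × ℕ) | GoodLeaf L φ}.Finite := by
  apply Set.Finite.subset (pvars_finite φ).finite_subsets
  intro L hL
  exact good_subset_vars hL

lemma vars_le : ∀ n, pvars (phiR n) ⊆ {p : Bool × ℕ | p.2 ≤ n} ∧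
    pvars (phiS n) ⊆ {p : Bool × ℕ | p.2 ≤ n} := by
  intro n
  induction n with
  | zero =>
    constructor <;>
    · simp only [phiR, phiS, pvars]
      rintro ⟨b, m⟩ (h | h) <;> simp_all
  | succ n ih =>
    constructor
    · simp only [phiR, pvars]
      apply Set.union_subset
      · rintro ⟨b, m⟩ h; rcases h with h | h <;> simp_all
      · exact ih.2.trans (by intro p hp; exact Nat.le_succ_of_le hp)
    · simp only [phiS, pvars]
      apply Set.union_subset
      · rintro ⟨b, m⟩ h; rcases h with h | h <;> simp_all
      · exact ih.1.trans (by intro p hp; exact Nat.le_succ_of_le hp)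

lemma no_high_R {L : Set (Bool × ℕ)} {n : ℕ} (h : GoodLeaf L (phiR n))
    {b : Bool} {m : ℕ} (hm : n < m) : (b, m) ∉ L := by
  intro hmem
  have := (vars_le n).1 (good_subset_vars h hmem)
  simp only [Set.mem_setOf_eq] at this
  omega

lemma no_high_S {L : Set (Bool × ℕ)} {n : ℕ} (h : GoodLeaf L (phiS n))
    {b : Bool} {m : ℕ} (hm : n < m) : (b, m) ∉ L := by
  intro hmem
  have := (vars_le n).2 (good_subset_vars h hmem)
  simp only [Set.mem_setOf_eq] at this
  omega

lemma stepR {L : Set (Bool × ℕ)} {n : ℕ} (h : GoodLeaf L (phiS n)) :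
    GoodLeaf L (phiR (n + 1)) := by
  refine ⟨Or.inr h.1, ?_⟩
  intro L' hL' hsat
  rcases hsat with ⟨h1, _⟩ | h2
  · exact no_high_S h (Nat.lt_succ_self n) (hL'.1 h1)
  · exact h.2 L' hL' h2

lemma stepS {L : Set (Bool × ℕ)} {n : ℕ} (c : Bool) (h : GoodLeaf L (phiR n)) :
    GoodLeaf (insert (c, n + 1) L) (phiS (n + 1)) := by
  constructor
  · constructor
    · cases c
      · exact Or.inl (Set.mem_insert _ _)
      · exact Or.inr (Set.mem_insert _ _)
    · exact psat_mono (Set.subset_insert _ _) h.1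
  · intro L' hL' hsat
    have h2 : PSat (L' ∩ pvars (phiR n)) (phiR n) := psat_inter hsat.2
    have hsub : L' ∩ pvars (phiR n) ⊆ L := by
      rintro z ⟨hz1, hz2⟩
      have hz3 := (vars_le n).1 hz2
      rcases hL'.1 hz1 with h | h
      · exfalso; rw [h] at hz3; simp at hz3
      · exact h
    have hLe : L' ∩ pvars (phiR n) = L := by
      by_contra hne
      exact h.2 _ ⟨hsub, fun hs => hne (le_antisymm hsub hs)⟩ h2
    have hLsub : L ⊆ L' := hLe ▸ Set.inter_subset_left
    by_cases hc : (c, n + 1) ∈ L'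
    · exact hL'.2 (Set.insert_subset hc hLsub)
    · have hL'eq : L' = L := by
        apply le_antisymm _ hLsub
        intro z hz
        rcases hL'.1 hz with h | h
        · exact absurd (h ▸ hz) hc
        · exact h
      rcases hsat.1 with h1 | h1 <;>
        exact no_high_R h (Nat.lt_succ_self n) (hL'eq ▸ h1)

lemma goodR0 : GoodLeaf {(false, 0), (true, 0)} (phiR 0) := by
  constructor
  · exact ⟨Or.inl rfl, Or.inr rfl⟩
  · intro L' hL' hsat
    exact hL'.2 (by rintro z (rfl | rfl); exacts [hsat.1, hsat.2])

lemma goodS0 : GoodLeaf {((false : Bool), 0)} (phiS 0) := by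
  constructor
  · exact Or.inl rfl
  · intro L' hL' hsat
    rw [Set.ssubset_singleton_iff] at hL'
    subst hL'
    rcases hsat with h | h <;> exact h

lemma cardS (n : ℕ) :
    2 * {L : Set (Bool × ℕ) | GoodLeaf L (phiR n)}.ncard ≤
      {L : Set (Bool × ℕ) | GoodLeaf L (phiS (n + 1))}.ncard := by
  set G := {L : Set (Bool × ℕ) | GoodLeaf L (phiR n)} with hG
  have hGfin : G.Finite := goodset_finite _
  have hinj : ∀ c : Bool, Set.InjOn (fun L => insert ((c, n + 1)) L) G := by
    intro c L hL M hM heq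
    have hcL : (c, n + 1) ∉ L := no_high_R hL (Nat.lt_succ_self n)
    have hcM : (c, n + 1) ∉ M := no_high_R hM (Nat.lt_succ_self n)
    simp only at heq
    ext z
    constructor
    · intro hz
      rcases heq ▸ Set.mem_insert_of_mem _ hz with h | h
      · exact absurd (h ▸ hz) hcL
      · exact h
    · intro hz
      rcases heq ▸ Set.mem_insert_of_mem _ hz with h | h
      · exact absurd (h ▸ hz) hcM
      · exact h
  have hsub : ∀ c : Bool, (fun L => insert ((c, n + 1)) L) '' G ⊆
      {L : Set (Bool × ℕ) | GoodLeaf L (phiS (n + 1))} := by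
    rintro c _ ⟨L, hL, rfl⟩
    exact stepS c hL
  have hdisj : Disjoint ((fun L => insert (((false : Bool), n + 1)) L) '' G)
      ((fun L => insert (((true : Bool), n + 1)) L) '' G) := by
    rw [Set.disjoint_left]
    rintro _ ⟨L, hL, rfl⟩ ⟨M, hM, heq⟩
    have : ((true : Bool), n + 1) ∈ insert (((false : Bool), n + 1)) L := by
      simp only at heq
      rw [← heq]; exact Set.mem_insert _ _
    rcases this with h | h
    · simp at h
    · exact no_high_R hL (Nat.lt_succ_self n) h
  calc 2 * G.ncard
      = ((fun L => insert (((false : Bool), n + 1)) L) '' G).ncard +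
        ((fun L => insert (((true : Bool), n + 1)) L) '' G).ncard := by
        rw [Set.ncard_image_of_injOn (hinj false), Set.ncard_image_of_injOn (hinj true)]
        ring
    _ = (((fun L => insert (((false : Bool), n + 1)) L) '' G) ∪
        ((fun L => insert (((true : Bool), n + 1)) L) '' G)).ncard := by
        rw [Set.ncard_union_eq hdisj (hGfin.image _) (hGfin.image _)]
    _ ≤ _ := Set.ncard_le_ncard (Set.union_subset (hsub false) (hsub true))
          (goodset_finite _)

lemma main_bound (n : ℕ) :
    2 ^ (n / 2) ≤ {L : Set (Bool × ℕ) | GoodLeaf L (phiR n)}.ncard ∧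
    2 ^ ((n + 1) / 2) ≤ {L : Set (Bool × ℕ) | GoodLeaf L (phiS n)}.ncard := by
  induction n with
  | zero =>
    constructor
    · have : {(false, 0), (true, 0)} ∈ {L : Set (Bool × ℕ) | GoodLeaf L (phiR 0)} := goodR0
      simpa using Nat.succ_le_of_lt ((Set.ncard_pos (goodset_finite _)).2 ⟨_, this⟩)
    · have : {((false : Bool), 0)} ∈ {L : Set (Bool × ℕ) | GoodLeaf L (phiS 0)} := goodS0
      simpa using Nat.succ_le_of_lt ((Set.ncard_pos (goodset_finite _)).2 ⟨_, this⟩)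
  | succ n ih =>
    constructor
    · refine le_trans ih.2 (Set.ncard_le_ncard ?_ (goodset_finite _))
      intro L hL
      exact stepR hL
    · calc 2 ^ ((n + 2) / 2) = 2 * 2 ^ (n / 2) := by
            rw [show (n + 2) / 2 = n / 2 + 1 by omega, pow_succ]; ring
        _ ≤ 2 * {L : Set (Bool × ℕ) | GoodLeaf L (phiR n)}.ncard :=
            Nat.mul_le_mul_left 2 ih.1
        _ ≤ _ := cardS n

theorem many_good_leaf_sets (n : ℕ) :
    2 ^ (n / 2) ≤ {L : Set (Bool × ℕ) | GoodLeaf L (phiR n)}.ncard ∧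
    2 ^ (n / 2) ≤ {L : Set (Bool × ℕ) | GoodLeaf L (phiS n)}.ncard := by
  refine ⟨(main_bound n).1, le_trans ?_ (main_bound n).2⟩
  exact Nat.pow_le_pow_right (by norm_num) (Nat.div_le_div_right (Nat.le_succ n))
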